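/- If G is a closed cover of a space Y that is regular for X × [0,1] (that is, G is locally finite, locally finite dimensional, and every nonempty intersection of its elements is an absolute extensor for X × [0,1]), then any two continuous maps f, g : X → Y that are G-close are G-homotopic: there exists a homotopy H : X × [0,1] → Y from f to g such that for each G in G and each x in X, if both f(x) and g(x) lie in G, then the whole path t ↦ H(x,t) lies in G. -/

import Mathlib

open Set Function

/-- `E ⊆ Z` is an absolute extensor for the space `W`. -/
def IsAE {Z : Type*} [TopologicalSpace Z] (E : Set Z)
    (W : Type*) [TopologicalSpace W] : Prop :=
  ∀ A : Set W, IsClosed A → ∀ f : W → Z, ContinuousOn f A → MapsTo f A E →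
    ∃ g : W → Z, Continuous g ∧ MapsTo g univ E ∧ EqOn g f A

/-- The cover `𝒢` is locally finite dimensional (its nerve is such). -/
def LocFinDim {Y : Type*} (𝒢 : Set (Set Y)) : Prop :=
  ∀ G ∈ 𝒢, ∃ n : ℕ, ∀ B : Set (Set Y), B ⊆ 𝒢 → G ∈ B → (⋂₀ B).Nonempty →
    B.Finite → B.ncard ≤ n

section Aux

variable {X Y : Type*} [TopologicalSpace X] [TopologicalSpace Y]

/-- The set of points where both `f` and `g` land in every member of `ℬ`. -/
def DD (f g : X → Y) (ℬ : Set (Set Y)) : Set X := {x | ∀ G ∈ ℬ, f x ∈ G ∧ g x ∈ G}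

/-- Relevant finite subfamilies of the cover. -/
def RelF (𝒢 : Set (Set Y)) (f g : X → Y) (ℬ : Set (Set Y)) : Prop :=
  ℬ ⊆ 𝒢 ∧ ℬ.Nonempty ∧ ℬ.Finite ∧ (DD f g ℬ).Nonempty

/-- The maximal relevant family at a point. -/
def Bset (𝒢 : Set (Set Y)) (f g : X → Y) (x : X) : Set (Set Y) :=
  {G | G ∈ 𝒢 ∧ f x ∈ G ∧ g x ∈ G}

/-- Corank measure for the recursion. -/
noncomputable def mes (𝒢 : Set (Set Y)) (f g : X → Y) (ℬ : Set (Set Y)) : ℕ :=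
  sSup {n | ∃ ℬ', RelF 𝒢 f g ℬ' ∧ ℬ ⊆ ℬ' ∧ ℬ'.ncard = n} - ℬ.ncard

/-- The properties we demand of the partial homotopy attached to `ℬ`, given the
 previously constructed family `prev`. -/
def Good (𝒢 : Set (Set Y)) (f g : X → Y)
    (prev : Set (Set Y) → X × unitInterval → Y) (ℬ : Set (Set Y))
    (H : X × unitInterval → Y) : Prop :=
  Continuous H ∧ (∀ p, H p ∈ ⋂₀ ℬ) ∧
    (∀ x ∈ DD f g ℬ, H (x, 0) = f x ∧ H (x, 1) = g x) ∧
    (∀ ℬ', RelF 𝒢 f g ℬ' → ℬ ⊂ ℬ' → ∀ x ∈ DD f g ℬ', ∀ t, H (x, t) = prev ℬ' (x, t))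

open Classical in
noncomputable def ext1 (𝒢 : Set (Set Y)) (f g : X → Y)
    (prev : Set (Set Y) → X × unitInterval → Y) (ℬ : Set (Set Y)) :
    X × unitInterval → Y :=
  if h : ∃ H, Good 𝒢 f g prev ℬ H then h.choose else fun p => f p.1

noncomputable def FF (𝒢 : Set (Set Y)) (f g : X → Y) :
    ℕ → Set (Set Y) → X × unitInterval → Y
  | 0 => fun _ p => f p.1
  | (k+1) => fun ℬ =>
      if mes 𝒢 f g ℬ < k then FF 𝒢 f g k ℬ else ext1 𝒢 f g (FF 𝒢 f g k) ℬ

/-- The partial homotopy attached to `ℬ`. -/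
noncomputable def HH (𝒢 : Set (Set Y)) (f g : X → Y) (ℬ : Set (Set Y)) :
    X × unitInterval → Y :=
  FF 𝒢 f g (mes 𝒢 f g ℬ + 1) ℬ

lemma FF_eq (𝒢 : Set (Set Y)) (f g : X → Y) :
    ∀ j ℬ, mes 𝒢 f g ℬ < j → FF 𝒢 f g j ℬ = ext1 𝒢 f g (FF 𝒢 f g (mes 𝒢 f g ℬ)) ℬ := by
  intro j
  induction j with
  | zero => exact fun ℬ h => absurd h (Nat.not_lt_zero _)
  | succ j ih =>
    intro ℬ h
    by_cases h2 : mes 𝒢 f g ℬ < j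
    · show (if mes 𝒢 f g ℬ < j then FF 𝒢 f g j ℬ else _) = _
      rw [if_pos h2]; exact ih ℬ h2
    · have : mes 𝒢 f g ℬ = j := by omega
      show (if mes 𝒢 f g ℬ < j then _ else ext1 𝒢 f g (FF 𝒢 f g j) ℬ) = _
      rw [if_neg h2, this]

lemma HH_eq (𝒢 : Set (Set Y)) (f g : X → Y) (ℬ : Set (Set Y)) :
    HH 𝒢 f g ℬ = ext1 𝒢 f g (FF 𝒢 f g (mes 𝒢 f g ℬ)) ℬ :=
  FF_eq 𝒢 f g _ ℬ (Nat.lt_succ_self _)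

lemma FF_stab (𝒢 : Set (Set Y)) (f g : X → Y) {j : ℕ} {ℬ : Set (Set Y)}
    (h : mes 𝒢 f g ℬ < j) : FF 𝒢 f g j ℬ = HH 𝒢 f g ℬ := by
  rw [FF_eq 𝒢 f g j ℬ h, HH_eq]

lemma DD_antitone (f g : X → Y) {ℬ ℬ' : Set (Set Y)} (h : ℬ ⊆ ℬ') :
    DD f g ℬ' ⊆ DD f g ℬ := fun _ hx G hG => hx G (h hG)

lemma fx_mem_sInter (f g : X → Y) {ℬ : Set (Set Y)} {x : X} (hx : x ∈ DD f g ℬ) :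
    f x ∈ ⋂₀ ℬ := fun G hG => (hx G hG).1

lemma DD_closed {f g : X → Y} (hf : Continuous f) (hg : Continuous g)
    {𝒢 : Set (Set Y)} (hclosed : ∀ G ∈ 𝒢, IsClosed G) {ℬ : Set (Set Y)}
    (hsub : ℬ ⊆ 𝒢) : IsClosed (DD f g ℬ) := by
  have : DD f g ℬ = ⋂ G ∈ ℬ, (f ⁻¹' G ∩ g ⁻¹' G) := by
    ext x; simp [DD, forall_and]
  rw [this]
  exact isClosed_biInter fun G hG =>
    ((hclosed G (hsub hG)).preimage hf).inter ((hclosed G (hsub hG)).preimage hg)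

lemma Bset_finite {𝒢 : Set (Set Y)} (hlf : LocallyFinite (fun G : 𝒢 => (G : Set Y)))
    (f g : X → Y) (x : X) : (Bset 𝒢 f g x).Finite := by
  obtain ⟨V, hV, hfin⟩ := hlf (f x)
  have : Bset 𝒢 f g x ⊆ Subtype.val '' {i : 𝒢 | ((i : Set Y) ∩ V).Nonempty} := by
    intro G hG
    exact ⟨⟨G, hG.1⟩, ⟨f x, hG.2.1, mem_of_mem_nhds hV⟩, rfl⟩
  exact ((hfin.image Subtype.val)).subset this

lemma Rel_Bset {𝒢 : Set (Set Y)} (hlf : LocallyFinite (fun G : 𝒢 => (G : Set Y)))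
    {f g : X → Y} (hclose : ∀ x : X, ∃ G ∈ 𝒢, f x ∈ G ∧ g x ∈ G) (x : X) :
    RelF 𝒢 f g (Bset 𝒢 f g x) := by
  obtain ⟨G, hG, hfx, hgx⟩ := hclose x
  exact ⟨fun G hG => hG.1, ⟨G, hG, hfx, hgx⟩, Bset_finite hlf f g x,
    ⟨x, fun G hG => hG.2⟩⟩

lemma mem_DD_Bset (𝒢 : Set (Set Y)) (f g : X → Y) (x : X) :
    x ∈ DD f g (Bset 𝒢 f g x) := fun G hG => hG.2

lemma sub_Bset (𝒢 : Set (Set Y)) (f g : X → Y) {ℬ : Set (Set Y)} (hsub : ℬ ⊆ 𝒢)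
    {x : X} (hx : x ∈ DD f g ℬ) : ℬ ⊆ Bset 𝒢 f g x :=
  fun G hG => ⟨hsub hG, (hx G hG).1, (hx G hG).2⟩

lemma bddS {𝒢 : Set (Set Y)} (hlfd : LocFinDim 𝒢) {f g : X → Y} {ℬ : Set (Set Y)}
    (h : RelF 𝒢 f g ℬ) :
    BddAbove {n | ∃ ℬ', RelF 𝒢 f g ℬ' ∧ ℬ ⊆ ℬ' ∧ ℬ'.ncard = n} := by
  obtain ⟨G, hG⟩ := h.2.1
  obtain ⟨n, hn⟩ := hlfd G (h.1 hG)
  refine ⟨n, ?_⟩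
  rintro m ⟨ℬ', hrel, hsub, rfl⟩
  obtain ⟨x, hx⟩ := hrel.2.2.2
  exact hn ℬ' hrel.1 (hsub hG) ⟨f x, fx_mem_sInter f g hx⟩ hrel.2.2.1

lemma mes_lt {𝒢 : Set (Set Y)} (hlfd : LocFinDim 𝒢) {f g : X → Y}
    {ℬ ℬ' : Set (Set Y)} (h1 : RelF 𝒢 f g ℬ) (h2 : RelF 𝒢 f g ℬ')
    (hss : ℬ ⊂ ℬ') : mes 𝒢 f g ℬ' < mes 𝒢 f g ℬ := by
  set S := {n | ∃ ℬ'', RelF 𝒢 f g ℬ'' ∧ ℬ ⊆ ℬ'' ∧ ℬ''.ncard = n} with hS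
  set S' := {n | ∃ ℬ'', RelF 𝒢 f g ℬ'' ∧ ℬ' ⊆ ℬ'' ∧ ℬ''.ncard = n} with hS'
  have hbdd : BddAbove S := bddS hlfd h1
  have hmem : ℬ'.ncard ∈ S := ⟨ℬ', h2, hss.subset, rfl⟩
  have hmem' : ℬ'.ncard ∈ S' := ⟨ℬ', h2, Subset.rfl, rfl⟩
  have hsub : S' ⊆ S := by
    rintro m ⟨ℬ'', hrel, hsubs, rfl⟩
    exact ⟨ℬ'', hrel, hss.subset.trans hsubs, rfl⟩
  have hle : sSup S' ≤ sSup S := csSup_le_csSup hbdd ⟨_, hmem'⟩ hsub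
  have h1' : ℬ'.ncard ≤ sSup S := le_csSup hbdd hmem
  have h2' : ℬ.ncard < ℬ'.ncard := Set.ncard_lt_ncard hss h2.2.2.1
  show sSup S' - ℬ'.ncard < sSup S - ℬ.ncard
  omega

lemma DD_lf {𝒢 : Set (Set Y)} {f g : X → Y}
    (hlf : LocallyFinite (fun G : 𝒢 => (G : Set Y))) (hf : Continuous f) :
    LocallyFinite (fun ℬ : {ℬ : Set (Set Y) // RelF 𝒢 f g ℬ} => DD f g ℬ.1) := by
  intro x
  obtain ⟨V, hV, hfin⟩ := hlf (f x)
  refine ⟨f ⁻¹' V, hf.continuousAt.preimage_mem_nhds hV, ?_⟩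
  set T := Subtype.val '' {i : 𝒢 | ((i : Set Y) ∩ V).Nonempty} with hT
  have hTfin : T.Finite := hfin.image _
  have key : {i : {ℬ : Set (Set Y) // RelF 𝒢 f g ℬ} |
      (DD f g i.1 ∩ f ⁻¹' V).Nonempty} ⊆ Subtype.val ⁻¹' {ℬ | ℬ ⊆ T} := by
    rintro ⟨ℬ, hrel⟩ ⟨x', hx', hVx'⟩
    intro G hG
    exact ⟨⟨G, hrel.1 hG⟩, ⟨f x', (hx' G hG).1, hVx'⟩, rfl⟩
  exact (hTfin.finite_subsets.preimage (Subtype.val_injective.injOn)).subset key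

end Aux

/-- If `𝒢` is a closed cover of `Y` regular for `X × [0,1]`, then any two `𝒢`-close
continuous maps `f, g : X → Y` are `𝒢`-homotopic, by a homotopy whose path at `x` lies
in any member of `𝒢` containing both `f x` and `g x`. -/
theorem stmt8 {X Y : Type*} [TopologicalSpace X] [TopologicalSpace Y]
    (𝒢 : Set (Set Y)) (hcov : ⋃₀ 𝒢 = univ) (hclosed : ∀ G ∈ 𝒢, IsClosed G)
    (hlf : LocallyFinite (fun G : 𝒢 => (G : Set Y)))
    (hlfd : LocFinDim 𝒢)
    (hAE : ∀ ℬ ⊆ 𝒢, ℬ.Nonempty → (⋂₀ ℬ).Nonempty → IsAE (⋂₀ ℬ) (X × unitInterval))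
    (f g : X → Y) (hf : Continuous f) (hg : Continuous g)
    (hclose : ∀ x : X, ∃ G ∈ 𝒢, f x ∈ G ∧ g x ∈ G) :
    ∃ H : X × unitInterval → Y, Continuous H ∧
      (∀ x, H (x, 0) = f x) ∧ (∀ x, H (x, 1) = g x) ∧
      (∀ x, ∃ G ∈ 𝒢, ∀ t, H (x, t) ∈ G) ∧
      (∀ G ∈ 𝒢, ∀ x, f x ∈ G → g x ∈ G → ∀ t, H (x, t) ∈ G) := by
  classical
  -- the locally finite family of closed cylinders
  have hDDlf := DD_lf (f := f) (g := g) hlf hf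
  have hcyl_lf : LocallyFinite
      (fun ℬ : {ℬ : Set (Set Y) // RelF 𝒢 f g ℬ} => DD f g ℬ.1 ×ˢ (univ : Set unitInterval)) :=
    hDDlf.prod_right _
  have hcyl_cl : ∀ ℬ : {ℬ : Set (Set Y) // RelF 𝒢 f g ℬ},
      IsClosed (DD f g ℬ.1 ×ˢ (univ : Set unitInterval)) :=
    fun ℬ => (DD_closed hf hg hclosed ℬ.2.1).prod isClosed_univ
  have hone_ne_zero : (1 : unitInterval) ≠ 0 := fun h => one_ne_zero
    (congrArg Subtype.val h)
  -- main induction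
  have main : ∀ k (ℬ : Set (Set Y)), RelF 𝒢 f g ℬ → mes 𝒢 f g ℬ < k →
      Good 𝒢 f g (FF 𝒢 f g (mes 𝒢 f g ℬ)) ℬ (HH 𝒢 f g ℬ) := by
    intro k
    induction k using Nat.strong_induction_on with
    | _ k ih =>
    intro ℬ hrel hlt
    set k0 := mes 𝒢 f g ℬ with hk0
    -- the prescription map
    set ψ : X × unitInterval → Y := fun p =>
      if p.2 = 0 then f p.1 else if p.2 = 1 then g p.1
      else FF 𝒢 f g k0 (Bset 𝒢 f g p.1) p with hψ
    -- IH specialized to relevant strict supersets of ℬ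
    have ihsup : ∀ ℬ' : Set (Set Y), RelF 𝒢 f g ℬ' → ℬ ⊂ ℬ' →
        Good 𝒢 f g (FF 𝒢 f g (mes 𝒢 f g ℬ')) ℬ' (HH 𝒢 f g ℬ') := by
      intro ℬ' hrel' hss
      exact ih k0 hlt ℬ' hrel' (mes_lt hlfd hrel hrel' hss)
    -- key identification of ψ on supersets' cylinders
    have hψ_eq : ∀ ℬ' : Set (Set Y), RelF 𝒢 f g ℬ' → ℬ ⊂ ℬ' →
        ∀ p ∈ DD f g ℬ' ×ˢ (univ : Set unitInterval), ψ p = HH 𝒢 f g ℬ' p := by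
      rintro ℬ' hrel' hss ⟨x, t⟩ hp
      have hx : x ∈ DD f g ℬ' := hp.1
      have hG' := ihsup ℬ' hrel' hss
      by_cases ht0 : t = 0
      · subst ht0
        simp only [hψ, if_pos rfl]
        exact ((hG'.2.2.1 x hx).1).symm
      by_cases ht1 : t = 1
      · subst ht1
        simp only [hψ, if_neg hone_ne_zero, if_pos rfl]
        exact ((hG'.2.2.1 x hx).2).symm
      · simp only [hψ, if_neg ht0, if_neg ht1]
        -- ψ (x,t) = FF k0 (Bset x) (x,t)
        have hrelB : RelF 𝒢 f g (Bset 𝒢 f g x) := Rel_Bset hlf hclose x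
        have hsubB : ℬ' ⊆ Bset 𝒢 f g x := sub_Bset 𝒢 f g hrel'.1 hx
        rcases hsubB.ssubset_or_eq with hssB | heqB
        · have hmB' : mes 𝒢 f g (Bset 𝒢 f g x) < mes 𝒢 f g ℬ' :=
            mes_lt hlfd hrel' hrelB hssB
          have hmBk0 : mes 𝒢 f g (Bset 𝒢 f g x) < k0 :=
            hmB'.trans (mes_lt hlfd hrel hrel' hss)
          rw [FF_stab 𝒢 f g hmBk0]
          have := hG'.2.2.2 (Bset 𝒢 f g x) hrelB
            (hsubB.ssubset_of_ne (fun h => hssB.ne h)) x (mem_DD_Bset 𝒢 f g x) t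
          rw [this, FF_stab 𝒢 f g hmB']
        · rw [← heqB, FF_stab 𝒢 f g (mes_lt hlfd hrel hrel' hss)]
    -- the pieces
    set ι' : Type _ := {ℬ' : Set (Set Y) // RelF 𝒢 f g ℬ' ∧ ℬ ⊂ ℬ'} ⊕ Bool with hι'
    set s : ι' → Set (X × unitInterval) := Sum.elim
      (fun b => DD f g b.1 ×ˢ (univ : Set unitInterval))
      (fun b => DD f g ℬ ×ˢ ({if b then 1 else 0} : Set unitInterval)) with hs
    have hs_lf : LocallyFinite s := by
      apply LocallyFinite.sumElim
      · have : LocallyFinite ((fun ℬ' : {ℬ : Set (Set Y) // RelF 𝒢 f g ℬ} =>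
            DD f g ℬ'.1 ×ˢ (univ : Set unitInterval)) ∘
            (fun b : {ℬ' : Set (Set Y) // RelF 𝒢 f g ℬ' ∧ ℬ ⊂ ℬ'} => ⟨b.1, b.2.1⟩)) :=
          hcyl_lf.comp_injective (fun a b hab => Subtype.ext
            (congrArg (fun z : {ℬ : Set (Set Y) // RelF 𝒢 f g ℬ} => z.1) hab))
        exact this
      · exact locallyFinite_of_finite _
    have hs_cl : ∀ i, IsClosed (s i) := by
      rintro (b | b)
      · exact hcyl_cl ⟨b.1, b.2.1⟩
      · exact (DD_closed hf hg hclosed hrel.1).prod isClosed_singleton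
    have hs_cont : ∀ i, ContinuousOn ψ (s i) := by
      rintro (b | b)
      · exact ((ihsup b.1 b.2.1 b.2.2).1.continuousOn).congr
          (hψ_eq b.1 b.2.1 b.2.2)
      · cases b
        · -- t = 0 piece
          refine ((hf.comp continuous_fst).continuousOn).congr ?_
          rintro ⟨x, t⟩ hp
          have ht : t = 0 := hp.2
          simp [hψ, ht]
        · -- t = 1 piece
          refine ((hg.comp continuous_fst).continuousOn).congr ?_
          rintro ⟨x, t⟩ hp
          have ht : t = 1 := hp.2
          simp [hψ, ht, hone_ne_zero]
    set A : Set (X × unitInterval) := ⋃ i, s i with hA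
    have hA_cl : IsClosed A := hs_lf.isClosed_iUnion hs_cl
    have hψ_cont : ContinuousOn ψ A := hs_lf.continuousOn_iUnion hs_cl hs_cont
    obtain ⟨x0, hx0⟩ := hrel.2.2.2
    have hsInter_ne : (⋂₀ ℬ).Nonempty := ⟨f x0, fx_mem_sInter f g hx0⟩
    have hψ_maps : MapsTo ψ A (⋂₀ ℬ) := by
      rintro ⟨x, t⟩ hp
      rw [mem_iUnion] at hp
      obtain ⟨i, hi⟩ := hp
      by_cases ht0 : t = 0
      · subst ht0
        have hxD : x ∈ DD f g ℬ := by
          rcases i with b | b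
          · exact DD_antitone f g b.2.2.subset hi.1
          · exact hi.1
        simp only [hψ, if_pos rfl]
        exact fx_mem_sInter f g hxD
      by_cases ht1 : t = 1
      · subst ht1
        have hxD : x ∈ DD f g ℬ := by
          rcases i with b | b
          · exact DD_antitone f g b.2.2.subset hi.1
          · exact hi.1
        simp only [hψ, if_neg hone_ne_zero, if_pos rfl]
        exact fun G hG => (hxD G hG).2
      · rcases i with b | b
        · have := hψ_eq b.1 b.2.1 b.2.2 (x, t) hi
          rw [this]
          exact Set.sInter_subset_sInter b.2.2.subset
            ((ihsup b.1 b.2.1 b.2.2).2.1 (x, t))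
        · exfalso
          have : t ∈ ({if b then 1 else 0} : Set unitInterval) := hi.2
          rcases b with _ | _ <;> simp_all
    obtain ⟨H, hHc, hHm, hHeq⟩ :=
      hAE ℬ hrel.1 hrel.2.1 hsInter_ne A hA_cl ψ hψ_cont hψ_maps
    have key : ∃ H, Good 𝒢 f g (FF 𝒢 f g k0) ℬ H := by
      refine ⟨H, hHc, fun p => hHm (mem_univ p), ?_, ?_⟩
      · intro x hx
        constructor
        · have hmem : (x, (0 : unitInterval)) ∈ A := by
            rw [mem_iUnion]
            exact ⟨Sum.inr false, ⟨hx, by simp⟩⟩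
          rw [hHeq hmem]
          simp [hψ]
        · have hmem : (x, (1 : unitInterval)) ∈ A := by
            rw [mem_iUnion]
            exact ⟨Sum.inr true, ⟨hx, by simp⟩⟩
          rw [hHeq hmem]
          simp [hψ, hone_ne_zero]
      · intro ℬ' hrel' hss x hx t
        have hmem : (x, t) ∈ A := by
          rw [mem_iUnion]
          exact ⟨Sum.inl ⟨ℬ', hrel', hss⟩, ⟨hx, mem_univ _⟩⟩
        rw [hHeq hmem, hψ_eq ℬ' hrel' hss (x, t) ⟨hx, mem_univ _⟩,
          FF_stab 𝒢 f g (mes_lt hlfd hrel hrel' hss)]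
    rw [HH_eq, ext1, dif_pos key]
    exact key.choose_spec
  -- assemble the final homotopy
  have good : ∀ ℬ : Set (Set Y), RelF 𝒢 f g ℬ →
      Good 𝒢 f g (FF 𝒢 f g (mes 𝒢 f g ℬ)) ℬ (HH 𝒢 f g ℬ) :=
    fun ℬ h => main (mes 𝒢 f g ℬ + 1) ℬ h (Nat.lt_succ_self _)
  have compat : ∀ ℬ' : Set (Set Y), RelF 𝒢 f g ℬ' → ∀ x ∈ DD f g ℬ', ∀ t,
      HH 𝒢 f g ℬ' (x, t) = HH 𝒢 f g (Bset 𝒢 f g x) (x, t) := by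
    intro ℬ' hrel' x hx t
    have hrelB : RelF 𝒢 f g (Bset 𝒢 f g x) := Rel_Bset hlf hclose x
    have hsubB : ℬ' ⊆ Bset 𝒢 f g x := sub_Bset 𝒢 f g hrel'.1 hx
    rcases hsubB.ssubset_or_eq with hssB | heqB
    · have := (good ℬ' hrel').2.2.2 (Bset 𝒢 f g x) hrelB hssB x
        (mem_DD_Bset 𝒢 f g x) t
      rw [this, FF_stab 𝒢 f g (mes_lt hlfd hrel' hrelB hssB)]
    · rw [heqB]
  set Hfin : X × unitInterval → Y := fun p => HH 𝒢 f g (Bset 𝒢 f g p.1) p with hHfin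
  have hcov' : ⋃ ℬ : {ℬ : Set (Set Y) // RelF 𝒢 f g ℬ},
      (DD f g ℬ.1 ×ˢ (univ : Set unitInterval)) = univ := by
    apply eq_univ_of_forall
    rintro ⟨x, t⟩
    rw [mem_iUnion]
    exact ⟨⟨Bset 𝒢 f g x, Rel_Bset hlf hclose x⟩, ⟨mem_DD_Bset 𝒢 f g x, mem_univ _⟩⟩
  have hHfin_cont : Continuous Hfin := by
    apply hcyl_lf.continuous hcov' hcyl_cl
    rintro ⟨ℬ', hrel'⟩
    refine ((good ℬ' hrel').1.continuousOn).congr ?_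
    rintro ⟨x, t⟩ hp
    exact (compat ℬ' hrel' x hp.1 t).symm
  refine ⟨Hfin, hHfin_cont, ?_, ?_, ?_, ?_⟩
  · intro x
    exact ((good _ (Rel_Bset hlf hclose x)).2.2.1 x (mem_DD_Bset 𝒢 f g x)).1
  · intro x
    exact ((good _ (Rel_Bset hlf hclose x)).2.2.1 x (mem_DD_Bset 𝒢 f g x)).2
  · intro x
    obtain ⟨G, hG, hfx, hgx⟩ := hclose x
    exact ⟨G, hG, fun t =>
      (good _ (Rel_Bset hlf hclose x)).2.1 (x, t) G ⟨hG, hfx, hgx⟩⟩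
  · intro G hG x hfx hgx t
    exact (good _ (Rel_Bset hlf hclose x)).2.1 (x, t) G ⟨hG, hfx, hgx⟩
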